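/- arXiv:math/0602235 — 3 statements merged into one kernel-verified Lean document; each statement's English description precedes it below -/
import Mathlib

section
/- Let (A, m, k) be a noetherian commutative local ring and C an A-module with mC ≠ C. If Tor_1^A(C, k) = 0, then every sequence x_1, ..., x_m of elements of A that is a regular sequence on C is also a regular sequence on A. -/
open CategoryTheory Limits IsLocalRing

/-- `Tor_n^A(C, D) = 0`. -/
def TorIsZero (A : Type) [CommRing A] (n : ℕ) (C D : Type)
    [AddCommGroup C] [Module A C] [AddCommGroup D] [Module A D] : Prop :=
  IsZero (((Tor (ModuleCat A) n).obj (ModuleCat.of A C)).obj (ModuleCat.of A D))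

variable {A : Type} [CommRing A] {C : Type} [AddCommGroup C] [Module A C]

def TQ (A : Type) [CommRing A] (C : Type) [AddCommGroup C] [Module A C] (I : Ideal A) : Prop :=
  Function.Injective (LinearMap.lTensor C (Submodule.subtype I))

open scoped TensorProduct

lemma tq_top : TQ A C ⊤ := by
  intro x y h
  have h2 := congrArg (LinearMap.lTensor C (Submodule.topEquiv (R := A) (M := A)).symm.toLinearMap) h
  rw [← LinearMap.comp_apply, ← LinearMap.comp_apply, ← LinearMap.lTensor_comp] at h2
  have h3 : (Submodule.topEquiv (R := A) (M := A)).symm.toLinearMap ∘ₗ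
      Submodule.subtype ⊤ = LinearMap.id := by
    ext z; rfl
  rwa [h3, LinearMap.lTensor_id, LinearMap.id_apply, LinearMap.id_apply] at h2

lemma step [IsLocalRing A] (tqm : TQ A C (maximalIdeal A)) {I I₁ : Ideal A} (hle : I ≤ I₁)
    (tq1 : TQ A C I₁) {y : A} (hy1 : y ∈ I₁) (hyI : y ∉ I)
    (hsup : I₁ ≤ I ⊔ Ideal.span {y}) (hmy : ∀ t ∈ maximalIdeal A, t * y ∈ I) :
    TQ A C I := by
  set m : Ideal A := maximalIdeal A with hm
  -- the map u : m → I, t ↦ t•y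
  let u : ↥m →ₗ[A] ↥I := LinearMap.codRestrict I
    ((LinearMap.toSpanSingleton A A y) ∘ₗ Submodule.subtype m)
    (fun t => by simpa [smul_eq_mul] using hmy t t.2)
  let δ : ↥m →ₗ[A] A × ↥I := LinearMap.prod (Submodule.subtype m) (-u)
  let πb : A × ↥I →ₗ[A] A :=
    (LinearMap.toSpanSingleton A A y) ∘ₗ (LinearMap.fst A A ↥I)
      + (Submodule.subtype I) ∘ₗ (LinearMap.snd A A ↥I)
  have hπb : ∀ p : A × ↥I, πb p ∈ I₁ := by
    rintro ⟨t, i⟩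
    simp only [πb, LinearMap.add_apply, LinearMap.comp_apply, LinearMap.fst_apply,
      LinearMap.snd_apply, LinearMap.toSpanSingleton_apply, Submodule.coe_subtype]
    exact add_mem (Ideal.mul_mem_left _ _ hy1) (hle i.2)
  let π : A × ↥I →ₗ[A] ↥I₁ := LinearMap.codRestrict I₁ πb hπb
  have hπsurj : Function.Surjective π := by
    rintro ⟨x, hx⟩
    rcases Submodule.mem_sup.mp (hsup hx) with ⟨i, hi, s, hs, rfl⟩
    rcases Ideal.mem_span_singleton'.mp hs with ⟨t, rfl⟩
    refine ⟨(t, ⟨i, hi⟩), Subtype.ext ?_⟩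
    simp only [π, πb, LinearMap.codRestrict_apply, LinearMap.add_apply, LinearMap.comp_apply,
      LinearMap.fst_apply, LinearMap.snd_apply, LinearMap.toSpanSingleton_apply,
      Submodule.coe_subtype, smul_eq_mul]
    ring
  have hexact : Function.Exact δ π := by
    rintro ⟨t, i⟩
    constructor
    · intro hp
      have h0 : t * y + (i : A) = 0 := by
        have := congrArg (Subtype.val) hp
        simpa [π, πb, smul_eq_mul] using this
      have htm : t ∈ m := by
        by_contra hnot
        have hu : IsUnit t := by
          rw [hm] at hnot
          exact not_not.mp fun h => hnot (IsLocalRing.mem_maximalIdeal t |>.mpr h)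
        rcases hu with ⟨v, rfl⟩
        apply hyI
        have hy' : y = (↑v⁻¹ : A) * (-(i : A)) := by
          rw [← neg_eq_of_add_eq_zero_right h0, neg_neg, Units.inv_mul_cancel_left]
        rw [hy']
        exact Ideal.mul_mem_left _ _ (neg_mem i.2)
      refine ⟨⟨t, htm⟩, ?_⟩
      refine Prod.ext rfl (Subtype.ext ?_)
      simp only [δ, LinearMap.prod_apply, LinearMap.neg_apply, Function.prod, u,
        LinearMap.codRestrict_apply, LinearMap.comp_apply, Submodule.coe_subtype,
        LinearMap.toSpanSingleton_apply, smul_eq_mul]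
      rw [show ((-(u ⟨t, htm⟩) : ↥I) : A) = -(t * y) from rfl]
      exact neg_eq_of_add_eq_zero_right h0
    · rintro ⟨s, hs⟩
      have h9 : π (δ s) = 0 := by
        apply Subtype.ext
        simp [π, πb, δ, u, smul_eq_mul]
      rw [← hs]; exact h9
  have hT := lTensor_exact C hexact hπsurj
  refine (injective_iff_map_eq_zero _).mpr (fun ξ hξ0 => ?_)
  have h1 : LinearMap.lTensor C (Submodule.inclusion hle) ξ = 0 := by
    apply tq1
    rw [map_zero, ← LinearMap.comp_apply, ← LinearMap.lTensor_comp]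
    have he : Submodule.subtype I₁ ∘ₗ Submodule.inclusion hle = Submodule.subtype I := by
      ext z; rfl
    rw [he]; exact hξ0
  have h2 : π ∘ₗ (LinearMap.inr A A ↥I) = Submodule.inclusion hle := by
    ext x
    simp [π, πb]
  have h3 : LinearMap.lTensor C π (LinearMap.lTensor C (LinearMap.inr A A ↥I) ξ) = 0 := by
    rw [← LinearMap.comp_apply, ← LinearMap.lTensor_comp, h2, h1]
  obtain ⟨η, hη⟩ := (hT _).mp h3
  have h4 : LinearMap.lTensor C (Submodule.subtype m) η = 0 := by
    have hfδ : (LinearMap.fst A A ↥I) ∘ₗ δ = Submodule.subtype m := by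
      ext z; rfl
    have hfi : (LinearMap.fst A A ↥I) ∘ₗ (LinearMap.inr A A ↥I) = 0 := by
      ext z; rfl
    calc LinearMap.lTensor C (Submodule.subtype m) η
        = LinearMap.lTensor C ((LinearMap.fst A A ↥I) ∘ₗ δ) η := by rw [hfδ]
      _ = LinearMap.lTensor C (LinearMap.fst A A ↥I) (LinearMap.lTensor C δ η) := by
          rw [LinearMap.lTensor_comp]; rfl
      _ = LinearMap.lTensor C (LinearMap.fst A A ↥I)
            (LinearMap.lTensor C (LinearMap.inr A A ↥I) ξ) := by rw [hη]
      _ = LinearMap.lTensor C ((LinearMap.fst A A ↥I) ∘ₗ (LinearMap.inr A A ↥I)) ξ := by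
          rw [LinearMap.lTensor_comp]; rfl
      _ = 0 := by rw [hfi, LinearMap.lTensor_zero]; rfl
  have h5 : η = 0 := tqm (by rw [h4, map_zero])
  have h6 : LinearMap.lTensor C (LinearMap.inr A A ↥I) ξ = 0 := by
    rw [← hη, h5, map_zero]
  have h7 : (LinearMap.snd A A ↥I) ∘ₗ (LinearMap.inr A A ↥I) = LinearMap.id := by
    ext z; rfl
  calc ξ = LinearMap.lTensor C ((LinearMap.snd A A ↥I) ∘ₗ (LinearMap.inr A A ↥I)) ξ := by
        rw [h7, LinearMap.lTensor_id]; rfl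
    _ = LinearMap.lTensor C (LinearMap.snd A A ↥I)
          (LinearMap.lTensor C (LinearMap.inr A A ↥I) ξ) := by rw [LinearMap.lTensor_comp]; rfl
    _ = 0 := by rw [h6, map_zero]
lemma ideal_smul_top (I : Ideal A) : I • (⊤ : Submodule A A) = I := by
  rw [Ideal.smul_eq_mul, Ideal.mul_top]

lemma devissage [IsLocalRing A] [IsNoetherianRing A] (tqm : TQ A C (maximalIdeal A)) (n : ℕ) :
    ∀ I : Ideal A, maximalIdeal A ^ n ≤ I → TQ A C I := by
  classical
  haveI : IsNoetherian A A := by rwa [← isNoetherianRing_iff]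
  intro I
  induction I using IsNoetherian.induction with
  | _ I IH =>
  intro hnI
  by_cases hItop : I = ⊤
  · rw [hItop]; exact tq_top
  by_cases hmI : maximalIdeal A ≤ I
  · have : I = maximalIdeal A := le_antisymm (le_maximalIdeal hItop) hmI
    rw [this]; exact tqm
  · have h0 : ¬ maximalIdeal A ^ 0 ≤ I := fun h => hItop (top_le_iff.mp (by simpa using h))
    obtain ⟨k, hkP, hk1⟩ :
        ∃ k, (¬ maximalIdeal A ^ k ≤ I) ∧ maximalIdeal A ^ (k + 1) ≤ I := by
      refine ⟨Nat.findGreatest (fun k => ¬ maximalIdeal A ^ k ≤ I) n,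
        Nat.findGreatest_spec (P := fun k => ¬ maximalIdeal A ^ k ≤ I) (Nat.zero_le n) h0, ?_⟩
      have hkn : Nat.findGreatest (fun k => ¬ maximalIdeal A ^ k ≤ I) n ≤ n :=
        Nat.findGreatest_le n
      have hkltn : Nat.findGreatest (fun k => ¬ maximalIdeal A ^ k ≤ I) n < n := by
        refine lt_of_le_of_ne hkn (fun h => ?_)
        exact (h ▸ Nat.findGreatest_spec (P := fun k => ¬ maximalIdeal A ^ k ≤ I) (Nat.zero_le n) h0) hnI
      by_contra h
      exact Nat.findGreatest_is_greatest (Nat.lt_succ_self _) hkltn h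
    obtain ⟨y, hy, hyI⟩ := SetLike.not_le_iff_exists.mp hkP
    have hyI₁ : y ∈ I ⊔ Ideal.span {y} :=
      Submodule.mem_sup_right (Ideal.mem_span_singleton_self y)
    have hlt : I < I ⊔ Ideal.span {y} :=
      lt_of_le_of_ne le_sup_left (fun h => hyI (h ▸ hyI₁))
    have tq1 : TQ A C (I ⊔ Ideal.span {y}) :=
      IH _ hlt (le_trans hnI le_sup_left)
    refine step tqm le_sup_left tq1 hyI₁ hyI le_rfl (fun t ht => ?_)
    have : y * t ∈ maximalIdeal A ^ k * maximalIdeal A := Ideal.mul_mem_mul hy ht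
    rw [← pow_succ] at this
    rw [mul_comm]
    exact hk1 this

noncomputable def mulmap (I : Ideal A) : (C ⊗[A] ↥I) →ₗ[A] C :=
  TensorProduct.lift ((LinearMap.lsmul A C ∘ₗ Submodule.subtype I).flip)

@[simp] lemma mulmap_tmul (I : Ideal A) (c : C) (i : ↥I) :
    mulmap I (c ⊗ₜ i) = (i : A) • c := rfl

lemma mulmap_eq (I : Ideal A) :
    (mulmap I : (C ⊗[A] ↥I) →ₗ[A] C) =
      (TensorProduct.rid A C).toLinearMap ∘ₗ LinearMap.lTensor C (Submodule.subtype I) :=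
  TensorProduct.ext' fun c i => by simp

lemma mulmap_inj {I : Ideal A} (h : TQ A C I) :
    Function.Injective (mulmap I : (C ⊗[A] ↥I) →ₗ[A] C) := by
  rw [mulmap_eq]
  exact (TensorProduct.rid A C).injective.comp h

lemma range_mulmap (I : Ideal A) :
    LinearMap.range (mulmap I : (C ⊗[A] ↥I) →ₗ[A] C) = I • (⊤ : Submodule A C) := by
  apply le_antisymm
  · rintro _ ⟨ξ, rfl⟩
    induction ξ using TensorProduct.induction_on with
    | zero => simp
    | tmul c i => simpa using Submodule.smul_mem_smul i.2 Submodule.mem_top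
    | add x y hx hy => rw [map_add]; exact Submodule.add_mem _ hx hy
  · refine Submodule.smul_le.mpr (fun a ha c _ => ⟨c ⊗ₜ ⟨a, ha⟩, rfl⟩)

lemma mulmap_incl {I J : Ideal A} (h : I ≤ J) :
    (mulmap J : (C ⊗[A] ↥J) →ₗ[A] C) ∘ₗ LinearMap.lTensor C (Submodule.inclusion h) =
      mulmap I :=
  TensorProduct.ext' fun c i => by simp
lemma chase [IsLocalRing A] {I' : Ideal A} (hI'm : I' ≤ maximalIdeal A) {a : A} (haI : a ∉ I')
    (haC : ∀ c : C, a • c ∈ I' • (⊤ : Submodule A C))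
    (hQ : TQ A C (I' ⊔ Ideal.span {a})) (c : C) :
    c ∈ maximalIdeal A • (⊤ : Submodule A C) := by
  set I'' : Ideal A := I' ⊔ Ideal.span {a} with hI''
  have hle : I' ≤ I'' := le_sup_left
  have ha'' : a ∈ I'' := Submodule.mem_sup_right (Ideal.mem_span_singleton_self a)
  -- find η in C ⊗ I' with the same image
  have hac : a • c ∈ LinearMap.range (mulmap I' : (C ⊗[A] ↥I') →ₗ[A] C) := by
    rw [range_mulmap]; exact haC c
  obtain ⟨η, hη⟩ := hac
  have hz : (c ⊗ₜ (⟨a, ha''⟩ : ↥I'') : C ⊗[A] ↥I'') =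
      LinearMap.lTensor C (Submodule.inclusion hle) η := by
    apply mulmap_inj hQ
    rw [← LinearMap.comp_apply, mulmap_incl, hη, mulmap_tmul]
  -- construct β : I'' →ₗ A ⧸ m with β ⟨a⟩ = 1, β|I' = 0
  set W : Submodule A ↥I'' := Submodule.comap (Submodule.subtype I'') I' with hW
  set φ : A →ₗ[A] (↥I'' ⧸ W) := W.mkQ ∘ₗ LinearMap.toSpanSingleton A ↥I'' ⟨a, ha''⟩ with hφ
  have hφs : Function.Surjective φ := by
    intro q
    obtain ⟨x, rfl⟩ := Submodule.mkQ_surjective W q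
    have hx2 : (x : A) ∈ I' ⊔ Ideal.span {a} := x.2
    obtain ⟨i, hi, s, hs, hx⟩ := Submodule.mem_sup.mp hx2
    obtain ⟨t, rfl⟩ := Ideal.mem_span_singleton'.mp hs
    refine ⟨t, ?_⟩
    show W.mkQ (t • (⟨a, ha''⟩ : ↥I'')) = W.mkQ x
    rw [Submodule.mkQ_apply, Submodule.mkQ_apply, Submodule.Quotient.eq]
    have hval : ((t • (⟨a, ha''⟩ : ↥I'') - x : ↥I'') : A) = -i := by
      have : ((t • (⟨a, ha''⟩ : ↥I'') - x : ↥I'') : A) = t * a - (x : A) := by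
        simp [smul_eq_mul]
      rw [this, ← hx]; ring
    show (t • (⟨a, ha''⟩ : ↥I'') - x : ↥I'') ∈ W
    rw [hW, Submodule.mem_comap]
    show ((t • (⟨a, ha''⟩ : ↥I'') - x : ↥I'') : A) ∈ I'
    rw [hval]
    exact neg_mem hi
  have hkerφ : LinearMap.ker φ ≤ (maximalIdeal A : Ideal A) := by
    apply le_maximalIdeal
    intro htop
    have h1 : (1 : A) ∈ LinearMap.ker φ := htop ▸ Submodule.mem_top
    rw [LinearMap.mem_ker] at h1
    have : ((⟨a, ha''⟩ : ↥I'')) ∈ W := by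
      have := (Submodule.Quotient.mk_eq_zero W).mp (by simpa [φ] using h1)
      exact this
    exact haI this
  set e := φ.quotKerEquivOfSurjective hφs with he
  set β : ↥I'' →ₗ[A] (A ⧸ (maximalIdeal A : Ideal A)) :=
    (Submodule.mapQ (LinearMap.ker φ) (maximalIdeal A) LinearMap.id
        (fun x hx => hkerφ hx)) ∘ₗ e.symm.toLinearMap ∘ₗ W.mkQ with hβ
  have heapp : ∀ t : A, e (Submodule.Quotient.mk t) = φ t := by
    intro t
    rfl
  have hβa : β ⟨a, ha''⟩ = Submodule.Quotient.mk 1 := by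
    have h1 : φ 1 = W.mkQ ⟨a, ha''⟩ := by
      simp [φ]
    have h2 : e.symm (W.mkQ ⟨a, ha''⟩) = Submodule.Quotient.mk 1 := by
      rw [← h1, ← heapp 1, e.symm_apply_apply]
    rw [hβ]
    simp only [LinearMap.comp_apply, LinearEquiv.coe_coe]
    rw [h2, Submodule.mapQ_apply, LinearMap.id_apply]
  have hβ0 : β ∘ₗ Submodule.inclusion hle = 0 := by
    ext x
    have hmem : (Submodule.inclusion hle x : ↥I'') ∈ W := by
      rw [hW, Submodule.mem_comap]
      exact x.2
    rw [hβ]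
    simp only [LinearMap.comp_apply, LinearMap.zero_apply, Submodule.mkQ_apply]
    rw [(Submodule.Quotient.mk_eq_zero W).mpr hmem]
    rw [map_zero, map_zero]
  -- apply lTensor β to hz
  have key : (c ⊗ₜ (Submodule.Quotient.mk 1 : A ⧸ (maximalIdeal A : Ideal A))
      : C ⊗[A] (A ⧸ (maximalIdeal A : Ideal A))) = 0 := by
    have h3 := congrArg (LinearMap.lTensor C β) hz
    rw [LinearMap.lTensor_tmul, hβa] at h3
    rw [← LinearMap.comp_apply, ← LinearMap.lTensor_comp, hβ0] at h3
    simpa using h3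
  -- the evaluation map w
  have hker2 : ∀ c' : C, (maximalIdeal A : Ideal A) ≤ LinearMap.ker
      (LinearMap.toSpanSingleton A (C ⧸ (maximalIdeal A • ⊤ : Submodule A C))
        (Submodule.Quotient.mk c')) := by
    intro c' t ht
    rw [LinearMap.mem_ker, LinearMap.toSpanSingleton_apply, ← Submodule.Quotient.mk_smul,
      Submodule.Quotient.mk_eq_zero]
    exact Submodule.smul_mem_smul ht Submodule.mem_top
  set W2 : C →ₗ[A] (A ⧸ (maximalIdeal A : Ideal A)) →ₗ[A]
      (C ⧸ (maximalIdeal A • ⊤ : Submodule A C)) :=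
    { toFun := fun c' => Submodule.liftQ _
        (LinearMap.toSpanSingleton A _ (Submodule.Quotient.mk c')) (hker2 c')
      map_add' := by
        intro x y
        refine Submodule.linearMap_qext _ (LinearMap.ext_ring ?_)
        simp only [LinearMap.comp_apply, Submodule.mkQ_apply, Submodule.liftQ_apply,
          LinearMap.add_apply, LinearMap.toSpanSingleton_apply, one_smul]
        exact Submodule.Quotient.mk_add _
      map_smul' := by
        intro s x
        refine Submodule.linearMap_qext _ (LinearMap.ext_ring ?_)
        simp only [LinearMap.comp_apply, Submodule.mkQ_apply, Submodule.liftQ_apply,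
          LinearMap.toSpanSingleton_apply, RingHom.id_apply, LinearMap.smul_apply, one_smul]
        rfl } with hW2
  have hfinal := congrArg (TensorProduct.lift W2) key
  rw [map_zero, TensorProduct.lift.tmul] at hfinal
  have h9 : W2 c (Submodule.Quotient.mk 1) = Submodule.Quotient.mk c := by
    show (Submodule.liftQ _ _ (hker2 c)) (Submodule.Quotient.mk 1) = _
    rw [Submodule.liftQ_apply, LinearMap.toSpanSingleton_apply, one_smul]
  rw [h9] at hfinal
  exact (Submodule.Quotient.mk_eq_zero _).mp hfinal
lemma main_claim [IsNoetherianRing A] [IsLocalRing A]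
    (hmC : maximalIdeal A • (⊤ : Submodule A C) ≠ ⊤)
    (tqm : TQ A C (maximalIdeal A))
    {q : Ideal A} {a : A} (haC : ∀ c : C, a • c ∈ q • (⊤ : Submodule A C)) : a ∈ q := by
  by_cases hqtop : q = ⊤
  · rw [hqtop]; trivial
  have hqm : q ≤ maximalIdeal A := le_maximalIdeal hqtop
  have key : ∀ n : ℕ, a ∈ q ⊔ maximalIdeal A ^ (n + 1) := by
    intro n
    by_contra haI
    set I' : Ideal A := q ⊔ maximalIdeal A ^ (n + 1) with hI'
    have hI'm : I' ≤ maximalIdeal A :=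
      sup_le hqm (Ideal.pow_le_self (Nat.succ_ne_zero n))
    have hQ : TQ A C (I' ⊔ Ideal.span {a}) :=
      devissage tqm (n + 1) _ (le_trans le_sup_right le_sup_left)
    have hc : ∀ c : C, c ∈ maximalIdeal A • (⊤ : Submodule A C) :=
      chase hI'm haI
        (fun c => Submodule.smul_mono_left le_sup_left (haC c)) hQ
    exact hmC (eq_top_iff.mpr (fun c _ => hc c))
  haveI : Module.Finite A (A ⧸ q) :=
    Module.Finite.of_surjective (Submodule.mkQ q) (Submodule.mkQ_surjective q)
  have hbot := Ideal.iInf_pow_smul_eq_bot_of_isLocalRing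
    (R := A) (M := A ⧸ q) (I := maximalIdeal A)
    (Ideal.IsMaximal.ne_top (maximalIdeal.isMaximal A))
  have hmem : (Submodule.Quotient.mk a : A ⧸ q) ∈
      (⨅ i : ℕ, maximalIdeal A ^ i • ⊤ : Submodule A (A ⧸ q)) := by
    rw [Submodule.mem_iInf]
    intro i
    cases i with
    | zero => simp
    | succ n =>
      rcases Submodule.mem_sup.mp (key n) with ⟨x, hx, w, hw, rfl⟩
      have h1 : (Submodule.Quotient.mk (x + w) : A ⧸ q) = Submodule.Quotient.mk w := by
        rw [Submodule.Quotient.eq]; simpa using hx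
      have h2 : (Submodule.Quotient.mk w : A ⧸ q) =
          w • (Submodule.Quotient.mk 1 : A ⧸ q) := by
        rw [← Submodule.Quotient.mk_smul, smul_eq_mul, mul_one]
      rw [h1, h2]
      exact Submodule.smul_mem_smul hw Submodule.mem_top
  rw [hbot] at hmem
  rw [Submodule.mem_bot] at hmem
  exact (Submodule.Quotient.mk_eq_zero _).mp hmem
lemma schanuel {P0 Q0 N : Type} [AddCommGroup P0] [Module A P0] [AddCommGroup Q0] [Module A Q0]
    [AddCommGroup N] [Module A N]
    (g : P0 →ₗ[A] N) (g' : Q0 →ₗ[A] N)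
    (σ : Q0 →ₗ[A] P0) (hσ : g ∘ₗ σ = g') (τ : P0 →ₗ[A] Q0) (hτ : g' ∘ₗ τ = g)
    (hK : Function.Injective (LinearMap.lTensor C (Submodule.subtype (LinearMap.ker g)))) :
    Function.Injective (LinearMap.lTensor C (Submodule.subtype (LinearMap.ker g'))) := by
  set K := LinearMap.ker g
  set K' := LinearMap.ker g'
  -- s1 : K' × P0 → Q0, (w, p) ↦ w + τ p
  set s1 : (↥K' × P0) →ₗ[A] Q0 :=
    Submodule.subtype K' ∘ₗ LinearMap.fst A ↥K' P0 + τ ∘ₗ LinearMap.snd A ↥K' P0 with hs1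
  have hu1 : ∀ z : ↥K' × P0, (LinearMap.snd A ↥K' P0 - σ ∘ₗ s1) z ∈ K := by
    rintro ⟨w, p⟩
    have hw : g' (w : Q0) = 0 := w.2
    simp only [LinearMap.sub_apply, LinearMap.snd_apply, LinearMap.comp_apply, hs1,
      LinearMap.add_apply, LinearMap.fst_apply, Submodule.coe_subtype]
    rw [LinearMap.mem_ker, map_sub]
    have h1 : g (σ ((w : Q0) + τ p)) = g' ((w : Q0) + τ p) := by
      rw [← hσ]; rfl
    rw [h1, map_add, hw, zero_add]
    have h2 : g' (τ p) = g p := by rw [← hτ]; rfl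
    rw [h2, sub_self]
  set u : (↥K' × P0) →ₗ[A] (↥K × Q0) :=
    LinearMap.prod (LinearMap.codRestrict K (LinearMap.snd A ↥K' P0 - σ ∘ₗ s1) hu1) s1 with hu
  set s2 : (↥K × Q0) →ₗ[A] P0 :=
    Submodule.subtype K ∘ₗ LinearMap.fst A ↥K Q0 + σ ∘ₗ LinearMap.snd A ↥K Q0 with hs2
  have hv1 : ∀ z : ↥K × Q0, (LinearMap.snd A ↥K Q0 - τ ∘ₗ s2) z ∈ K' := by
    rintro ⟨x, t⟩
    have hx : g (x : P0) = 0 := x.2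
    simp only [LinearMap.sub_apply, LinearMap.snd_apply, LinearMap.comp_apply, hs2,
      LinearMap.add_apply, LinearMap.fst_apply, Submodule.coe_subtype]
    rw [LinearMap.mem_ker, map_sub]
    have h1 : g' (τ ((x : P0) + σ t)) = g ((x : P0) + σ t) := by
      rw [← hτ]; rfl
    rw [h1, map_add, hx, zero_add]
    have h2 : g (σ t) = g' t := by rw [← hσ]; rfl
    rw [h2, sub_self]
  set v : (↥K × Q0) →ₗ[A] (↥K' × P0) :=
    LinearMap.prod (LinearMap.codRestrict K' (LinearMap.snd A ↥K Q0 - τ ∘ₗ s2) hv1) s2 with hv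
  have hvu : v ∘ₗ u = LinearMap.id := by
    apply LinearMap.ext
    rintro ⟨w, p⟩
    have hcomp1 : s2 (u (w, p)) = p := by
      simp [hs2, hu, hs1]
    apply Prod.ext
    · apply Subtype.ext
      show s1 (w, p) - τ (s2 (u (w, p))) = (w : Q0)
      rw [hcomp1]
      simp [hs1]
    · show s2 (u (w, p)) = p
      exact hcomp1
  -- W2 : K × Q0 → Q0 × P0, (x, t) ↦ (t, x + σ t)
  set W2 : (↥K × Q0) →ₗ[A] (Q0 × P0) :=
    LinearMap.prod (LinearMap.snd A ↥K Q0) s2 with hW2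
  have hW2inj : Function.Injective (LinearMap.lTensor C W2) := by
    refine (injective_iff_map_eq_zero _).mpr (fun ζ hζ => ?_)
    have hfstW2 : (LinearMap.fst A Q0 P0) ∘ₗ W2 = LinearMap.snd A ↥K Q0 := by
      ext z <;> rfl
    have hsnd : LinearMap.lTensor C (LinearMap.snd A ↥K Q0) ζ = 0 := by
      rw [← hfstW2, LinearMap.lTensor_comp, LinearMap.comp_apply, hζ, map_zero]
    have hsndW2 : (LinearMap.snd A Q0 P0) ∘ₗ W2 =
        Submodule.subtype K ∘ₗ LinearMap.fst A ↥K Q0 + σ ∘ₗ LinearMap.snd A ↥K Q0 := by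
      ext z <;> rfl
    have hfst0 : LinearMap.lTensor C (Submodule.subtype K)
        (LinearMap.lTensor C (LinearMap.fst A ↥K Q0) ζ) = 0 := by
      have h1 : LinearMap.lTensor C (Submodule.subtype K ∘ₗ LinearMap.fst A ↥K Q0) ζ
          + LinearMap.lTensor C (σ ∘ₗ LinearMap.snd A ↥K Q0) ζ = 0 := by
        rw [← LinearMap.add_apply, ← LinearMap.lTensor_add, ← hsndW2,
          LinearMap.lTensor_comp, LinearMap.comp_apply, hζ, map_zero]
      have h2 : LinearMap.lTensor C (σ ∘ₗ LinearMap.snd A ↥K Q0) ζ = 0 := by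
        rw [LinearMap.lTensor_comp, LinearMap.comp_apply, hsnd, map_zero]
      rw [h2, add_zero] at h1
      rw [← LinearMap.comp_apply, ← LinearMap.lTensor_comp]
      exact h1
    have hfst : LinearMap.lTensor C (LinearMap.fst A ↥K Q0) ζ = 0 := hK (by rw [hfst0, map_zero])
    have hid : (LinearMap.inl A ↥K Q0) ∘ₗ (LinearMap.fst A ↥K Q0)
        + (LinearMap.inr A ↥K Q0) ∘ₗ (LinearMap.snd A ↥K Q0) = LinearMap.id := by
      ext z <;> simp
    calc ζ = LinearMap.lTensor C LinearMap.id ζ := by rw [LinearMap.lTensor_id]; rfl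
      _ = LinearMap.lTensor C ((LinearMap.inl A ↥K Q0) ∘ₗ (LinearMap.fst A ↥K Q0)
            + (LinearMap.inr A ↥K Q0) ∘ₗ (LinearMap.snd A ↥K Q0)) ζ := by rw [hid]
      _ = LinearMap.lTensor C (LinearMap.inl A ↥K Q0)
            (LinearMap.lTensor C (LinearMap.fst A ↥K Q0) ζ)
          + LinearMap.lTensor C (LinearMap.inr A ↥K Q0)
            (LinearMap.lTensor C (LinearMap.snd A ↥K Q0) ζ) := by
          rw [LinearMap.lTensor_add, LinearMap.add_apply, LinearMap.lTensor_comp,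
            LinearMap.lTensor_comp]; rfl
      _ = 0 := by rw [hfst, hsnd, map_zero, map_zero, add_zero]
  -- main chase
  refine (injective_iff_map_eq_zero _).mpr (fun η hη => ?_)
  have hW2ui : W2 ∘ₗ u ∘ₗ LinearMap.inl A ↥K' P0 =
      LinearMap.inl A Q0 P0 ∘ₗ Submodule.subtype K' := by
    apply LinearMap.ext
    intro w
    apply Prod.ext
    · show s1 (w, 0) = (w : Q0)
      simp [hs1]
    · show s2 (u ((w : ↥K'), 0)) = 0
      have h1 : s1 ((w : ↥K'), 0) = (w : Q0) := by simp [hs1]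
      simp only [hs2, hu, LinearMap.prod_apply, Function.prod, LinearMap.add_apply,
        LinearMap.comp_apply, LinearMap.fst_apply, LinearMap.snd_apply,
        LinearMap.codRestrict_apply, Submodule.coe_subtype, LinearMap.sub_apply]
      rw [h1]
      abel
  have hζ0 : LinearMap.lTensor C W2 (LinearMap.lTensor C (u ∘ₗ LinearMap.inl A ↥K' P0) η)
      = 0 := by
    rw [← LinearMap.comp_apply, ← LinearMap.lTensor_comp, hW2ui]
    rw [LinearMap.lTensor_comp, LinearMap.comp_apply, hη, map_zero]
  have hζ : LinearMap.lTensor C (u ∘ₗ LinearMap.inl A ↥K' P0) η = 0 := hW2inj (by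
    rw [hζ0, map_zero])
  have hinl : LinearMap.lTensor C (LinearMap.inl A ↥K' P0) η = 0 := by
    have h1 : v ∘ₗ (u ∘ₗ LinearMap.inl A ↥K' P0) = LinearMap.inl A ↥K' P0 := by
      rw [← LinearMap.comp_assoc, hvu, LinearMap.id_comp]
    rw [← h1, LinearMap.lTensor_comp, LinearMap.comp_apply, hζ, map_zero]
  have h2 : (LinearMap.fst A ↥K' P0) ∘ₗ (LinearMap.inl A ↥K' P0) = LinearMap.id := by
    ext z; rfl
  calc η = LinearMap.lTensor C ((LinearMap.fst A ↥K' P0) ∘ₗ (LinearMap.inl A ↥K' P0)) η := by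
        rw [h2, LinearMap.lTensor_id]; rfl
    _ = LinearMap.lTensor C (LinearMap.fst A ↥K' P0)
          (LinearMap.lTensor C (LinearMap.inl A ↥K' P0) η) := by
        rw [LinearMap.lTensor_comp]; rfl
    _ = 0 := by rw [hinl, map_zero]
open MonoidalCategory in
lemma base [IsLocalRing A] (hTor : TorIsZero A 1 C (ResidueField A)) :
    TQ A C (maximalIdeal A) := by
  let kM : ModuleCat A := ModuleCat.of A (ResidueField A)
  let F : ModuleCat A ⥤ ModuleCat A := (tensoringLeft (ModuleCat A)).obj (ModuleCat.of A C)
  let P : ProjectiveResolution kM := (HasProjectiveResolution.out (Z := kM)).some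
  -- exactness of C ⊗ P at degree 1, elementwise
  have h1 : IsZero (((F.mapHomologicalComplex _).obj P.complex).homology 1) :=
    IsZero.of_iso hTor (P.isoLeftDerivedObj F 1).symm
  have h2 := (HomologicalComplex.exactAt_iff_isZero_homology _ 1).mpr h1
  have hex1 : ∀ x : C ⊗[A] (P.complex.X 1),
      LinearMap.lTensor C (P.complex.d 1 0).hom x = 0 →
      ∃ y : C ⊗[A] (P.complex.X 2),
        LinearMap.lTensor C (P.complex.d 2 1).hom y = x :=
    (ShortComplex.moduleCat_exact_iff _).mp
      ((HomologicalComplex.exactAt_iff' _ 2 1 0 (by simp) (by simp)).mp h2)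
  -- the augmentation
  set pik : (P.complex.X 0 : Type) →ₗ[A] ResidueField A := (P.π.f 0).hom with hpik
  have hsurj_pik : Function.Surjective pik := by
    have : Epi (P.π.f 0) := inferInstance
    exact (ModuleCat.epi_iff_surjective (P.π.f 0)).mp this
  have hex0 : ∀ x : (P.complex.X 0 : Type), pik x = 0 →
      ∃ y, (P.complex.d 1 0).hom y = x :=
    (ShortComplex.moduleCat_exact_iff _).mp P.exact₀
  have hcomp : pik ∘ₗ (P.complex.d 1 0).hom = 0 :=
    congrArg ModuleCat.Hom.hom P.complex_d_comp_π_f_zero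
  have hdd : (P.complex.d 1 0).hom.comp
      (P.complex.d 2 1).hom = 0 := congrArg ModuleCat.Hom.hom (P.complex.d_comp_d 2 1 0)
  -- corestriction of d 1 0 to ker pik
  have hd10mem : ∀ y : (P.complex.X 1 : Type),
      (P.complex.d 1 0).hom y ∈ LinearMap.ker pik := by
    intro y
    rw [LinearMap.mem_ker, ← LinearMap.comp_apply, hcomp, LinearMap.zero_apply]
  set e1 : (P.complex.X 1 : Type) →ₗ[A] ↥(LinearMap.ker pik) :=
    LinearMap.codRestrict (LinearMap.ker pik)
      (P.complex.d 1 0).hom hd10mem with he1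
  have he1surj : Function.Surjective e1 := by
    rintro ⟨x, hx⟩
    obtain ⟨y, hy⟩ := hex0 x (LinearMap.mem_ker.mp hx)
    exact ⟨y, Subtype.ext hy⟩
  have hsub_e1 : (Submodule.subtype (LinearMap.ker pik)) ∘ₗ e1 =
      (P.complex.d 1 0).hom := by
    ext y; rfl
  -- injectivity of C ⊗ ker pik → C ⊗ P0
  have hKinj : Function.Injective
      (LinearMap.lTensor C (Submodule.subtype (LinearMap.ker pik))) := by
    refine (injective_iff_map_eq_zero _).mpr (fun ζ hζ => ?_)
    obtain ⟨ζ', rfl⟩ := LinearMap.lTensor_surjective C he1surj ζ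
    have h3 : LinearMap.lTensor C
        (P.complex.d 1 0).hom ζ' = 0 := by
      rw [← hsub_e1, LinearMap.lTensor_comp, LinearMap.comp_apply]
      exact hζ
    obtain ⟨ω, hω⟩ := hex1 _ h3
    have h4 : e1 ∘ₗ (P.complex.d 2 1).hom = 0 := by
      apply LinearMap.ext
      intro z
      apply Subtype.ext
      show (P.complex.d 1 0).hom
        ((P.complex.d 2 1).hom z) = 0
      rw [← LinearMap.comp_apply, hdd, LinearMap.zero_apply]
    rw [← hω, ← LinearMap.comp_apply, ← LinearMap.lTensor_comp, h4, LinearMap.lTensor_zero,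
      LinearMap.zero_apply]
  -- Schanuel comparison with A → k
  set g'map : A →ₗ[A] ResidueField A := Algebra.linearMap A (ResidueField A) with hg'
  have hg'surj : Function.Surjective g'map := Ideal.Quotient.mk_surjective
  have hkerg' : LinearMap.ker g'map = (maximalIdeal A : Ideal A) := by
    ext x
    simp [hg', Algebra.linearMap_apply, Ideal.Quotient.eq_zero_iff_mem]
  obtain ⟨p₀, hp₀⟩ := hsurj_pik (g'map 1)
  set σ : A →ₗ[A] (P.complex.X 0 : Type) := LinearMap.toSpanSingleton A _ p₀ with hσdef
  have hσ : pik ∘ₗ σ = g'map := by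
    apply LinearMap.ext_ring
    rw [LinearMap.comp_apply, hσdef, LinearMap.toSpanSingleton_apply, one_smul, hp₀]
  haveI : Epi (ModuleCat.ofHom g'map : ModuleCat.of A A ⟶ kM) :=
    (ModuleCat.epi_iff_surjective (ModuleCat.ofHom g'map)).mpr hg'surj
  set τ : (P.complex.X 0 : Type) →ₗ[A] A :=
    (@Projective.factorThru _ _ _ _ _ _ (P.π.f 0)
      (ModuleCat.ofHom g'map : ModuleCat.of A A ⟶ kM) this).hom with hτdef
  have hτ : g'map ∘ₗ τ = pik :=
    congrArg ModuleCat.Hom.hom (@Projective.factorThru_comp _ _ _ _ _ _ (P.π.f 0) (ModuleCat.ofHom g'map : ModuleCat.of A A ⟶ kM) this)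
  have hfinal := schanuel pik g'map σ hσ τ hτ hKinj
  show Function.Injective (LinearMap.lTensor C (Submodule.subtype (maximalIdeal A)))
  rw [← hkerg']
  exact hfinal
/-- If `(A, m, k)` is a noetherian local ring and `C` an `A`-module with `mC ≠ C` and
`Tor_1^A(C, k) = 0`, then every `C`-regular sequence is `A`-regular. -/
theorem regular_on_ring_of_regular_on_module
    (A : Type) [CommRing A] [IsLocalRing A] [IsNoetherianRing A]
    (C : Type) [AddCommGroup C] [Module A C]
    (hmC : maximalIdeal A • (⊤ : Submodule A C) ≠ ⊤)
    (hTor : TorIsZero A 1 C (ResidueField A)) :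
    ∀ rs : List A, RingTheory.Sequence.IsRegular C rs → RingTheory.Sequence.IsRegular A rs := by
  intro rs hreg
  have tqm : TQ A C (maximalIdeal A) := base hTor
  refine ⟨⟨fun i hi => ?_⟩, fun h => ?_⟩
  · -- weakly regular
    set q : Ideal A := Ideal.ofList (rs.take i) with hq
    have hCreg := hreg.toIsWeaklyRegular.regular_mod_prev i hi
    intro x y hxy
    obtain ⟨b, rfl⟩ := Submodule.mkQ_surjective _ x
    obtain ⟨b', rfl⟩ := Submodule.mkQ_surjective _ y
    have hmem : rs[i] • b - rs[i] • b' ∈ (q • ⊤ : Submodule A A) := by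
      rw [← Submodule.Quotient.eq]
      rw [Submodule.Quotient.mk_smul, Submodule.Quotient.mk_smul]
      exact hxy
    have hrd : rs[i] * (b - b') ∈ q := by
      have : rs[i] • b - rs[i] • b' = rs[i] * (b - b') := by
        simp [smul_eq_mul, mul_sub]
      rw [this, ideal_smul_top] at hmem
      exact hmem
    have hd : ∀ c : C, (b - b') • c ∈ q • (⊤ : Submodule A C) := by
      intro c
      have h5 : rs[i] • (Submodule.Quotient.mk ((b - b') • c)
          : C ⧸ (q • ⊤ : Submodule A C)) = rs[i] • (0 : C ⧸ (q • ⊤ : Submodule A C)) := by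
        rw [smul_zero, ← Submodule.Quotient.mk_smul, Submodule.Quotient.mk_eq_zero]
        have : rs[i] • (b - b') • c = (rs[i] * (b - b')) • c := (mul_smul _ _ _).symm
        rw [this]
        exact Submodule.smul_mem_smul hrd Submodule.mem_top
      have h6 := hCreg h5
      rwa [Submodule.Quotient.mk_eq_zero] at h6
    have hdq : b - b' ∈ q := main_claim hmC tqm hd
    rw [Submodule.mkQ_apply, Submodule.mkQ_apply, Submodule.Quotient.eq, ideal_smul_top]
    exact hdq
  · -- nontrivial
    apply hreg.top_ne_smul
    have h1 : Ideal.ofList rs = ⊤ := by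
      rw [← ideal_smul_top (Ideal.ofList rs)]
      exact h.symm
    rw [h1, Submodule.top_smul]
end

section
/- Let (A, m, k) be a noetherian commutative local Cohen-Macaulay ring of dimension d, and let M : 0 → M_d → ... → M_0 → 0 be a complex of finitely generated free A-modules with H_0(M) finitely generated and H_i(M) of finite length for i ≥ 1. Then H_i(M) = 0 for all i ≥ 1. -/
open CategoryTheory Limits IsLocalRing

/-- A system of parameters of a local ring: a list of `ringKrullDim A` elements of the
maximal ideal generating an ideal containing a power of the maximal ideal. -/
def IsSystemOfParameters (A : Type) [CommRing A] [IsLocalRing A] (rs : List A) : Prop :=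
  (rs.length : WithBot ℕ∞) = ringKrullDim A ∧
  Ideal.span {x | x ∈ rs} ≤ IsLocalRing.maximalIdeal A ∧
  ∃ n : ℕ, IsLocalRing.maximalIdeal A ^ n ≤ Ideal.span {x | x ∈ rs}

/-- A big Cohen-Macaulay module: some system of parameters is a regular sequence on `C`. -/
def IsBigCohenMacaulay (A : Type) [CommRing A] [IsLocalRing A]
    (C : Type) [AddCommGroup C] [Module A C] : Prop :=
  ∃ rs : List A, IsSystemOfParameters A rs ∧ RingTheory.Sequence.IsRegular C rs

/-- A balanced big Cohen-Macaulay module: a big Cohen-Macaulay module on which every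
system of parameters is a regular sequence. -/
def IsBalancedBigCohenMacaulay (A : Type) [CommRing A] [IsLocalRing A]
    (C : Type) [AddCommGroup C] [Module A C] : Prop :=
  IsBigCohenMacaulay A C ∧
  ∀ rs : List A, IsSystemOfParameters A rs → RingTheory.Sequence.IsRegular C rs

/-- The depth of a local ring: supremum of lengths of regular sequences contained in the
maximal ideal. -/
noncomputable def localDepth (A : Type) [CommRing A] [IsLocalRing A] : ℕ∞ :=
  sSup {n : ℕ∞ | ∃ rs : List A, (∀ r ∈ rs, r ∈ IsLocalRing.maximalIdeal A) ∧
    RingTheory.Sequence.IsRegular A rs ∧ (rs.length : ℕ∞) = n}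

/-- A local ring is Cohen-Macaulay if its depth equals its Krull dimension. -/
def IsCohenMacaulayLocalRing (A : Type) [CommRing A] [IsLocalRing A] : Prop :=
  (localDepth A : WithBot ℕ∞) = ringKrullDim A

/-- A local ring is regular if its maximal ideal is generated by `ringKrullDim A` elements. -/
def IsRegularLocalRing' (A : Type) [CommRing A] [IsLocalRing A] : Prop :=
  ∃ s : Finset A, Ideal.span (s : Set A) = IsLocalRing.maximalIdeal A ∧
    (s.card : WithBot ℕ∞) = ringKrullDim A

namespace CMVanishing

open RingTheory.Sequence Submodule Pointwise

universe v u

variable {A : Type u} [CommRing A]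

lemma mem_smul_top_iff {M : Type v} [AddCommGroup M] [Module A M] (r : A) (x : M) :
    x ∈ r • (⊤ : Submodule A M) ↔ ∃ g, r • g = x := by
  rw [← SetLike.mem_coe, Submodule.coe_pointwise_smul, Set.mem_smul_set]
  simp

def GoodRes (ys : List A) : ℕ → (W : Type v) → [AddCommGroup W] → [Module A W] → Prop
  | 0, W, _, _ => Subsingleton W
  | n+1, W, _, _ => ∃ (G : Type v) (_ : AddCommGroup G) (_ : Module A G) (f : G →ₗ[A] W),
      Function.Surjective f ∧ RingTheory.Sequence.IsWeaklyRegular G ys ∧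
      GoodRes ys n ↥(LinearMap.ker f)

lemma GoodRes.congr {ys : List A} {n : ℕ} {W W' : Type v} [AddCommGroup W] [Module A W]
    [AddCommGroup W'] [Module A W'] (e : W ≃ₗ[A] W') (h : GoodRes ys n W) :
    GoodRes ys n W' := by
  cases n with
  | zero =>
    have : Subsingleton W := h
    exact e.symm.toEquiv.subsingleton
  | succ n =>
    obtain ⟨G, i1, i2, f, hsurj, hreg, hres⟩ := h
    refine ⟨G, i1, i2, (e : W →ₗ[A] W').comp f, e.surjective.comp hsurj, hreg, ?_⟩
    have hker : LinearMap.ker ((e : W →ₗ[A] W').comp f) = LinearMap.ker f := by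
      rw [LinearMap.ker_comp, LinearEquiv.ker, Submodule.comap_bot]
    rw [hker]
    exact hres

lemma GoodRes.quot {y : A} {ys : List A} : ∀ {n : ℕ} {B : Type v} [AddCommGroup B] [Module A B],
    GoodRes (y :: ys) n B → IsSMulRegular B y → GoodRes ys n (QuotSMulTop y B) := by
  intro n
  induction n with
  | zero =>
    intro B _ _ h _
    have : Subsingleton B := h
    exact (Submodule.mkQ_surjective _).subsingleton
  | succ n IH =>
    intro B _ _ h hyB
    obtain ⟨G, _, _, f, hfsurj, hreg, hres⟩ := h
    obtain ⟨hyG, hregq⟩ := (isWeaklyRegular_cons_iff _ _ _).mp hreg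
    have hyC : IsSMulRegular ↥(LinearMap.ker f) y := fun a b hab =>
      Subtype.ext (hyG (by simpa using congrArg Subtype.val hab))
    refine ⟨QuotSMulTop y G, inferInstance, inferInstance, QuotSMulTop.map y f,
      QuotSMulTop.map_surjective y hfsurj, hregq, ?_⟩
    have hexact : Function.Exact (QuotSMulTop.map y (LinearMap.ker f).subtype)
        (QuotSMulTop.map y f) :=
      QuotSMulTop.map_exact y (LinearMap.exact_subtype_ker_map f) hfsurj
    have hker : LinearMap.ker (QuotSMulTop.map y f)
        = LinearMap.range (QuotSMulTop.map y (LinearMap.ker f).subtype) :=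
      LinearMap.exact_iff.mp hexact
    have hinj : Function.Injective (QuotSMulTop.map y (LinearMap.ker f).subtype) := by
      rw [← LinearMap.ker_eq_bot]
      refine (Submodule.eq_bot_iff _).mpr ?_
      intro w hw
      obtain ⟨c, rfl⟩ := Submodule.mkQ_surjective _ w
      have hw' : (Submodule.Quotient.mk ((c : G)) : QuotSMulTop y G) = 0 := by
        simpa [QuotSMulTop.map_apply_mk] using hw
      have h1 : (c : G) ∈ y • (⊤ : Submodule A G) := (Submodule.Quotient.mk_eq_zero _).mp hw'
      obtain ⟨g, hg⟩ := (mem_smul_top_iff y _).mp h1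
      have hgC : g ∈ LinearMap.ker f := by
        rw [LinearMap.mem_ker]
        apply hyB
        show y • f g = y • 0
        rw [smul_zero, ← map_smul, hg]
        exact c.2
      rw [Submodule.mkQ_apply, Submodule.Quotient.mk_eq_zero, mem_smul_top_iff]
      exact ⟨⟨g, hgC⟩, Subtype.ext hg⟩
    have e : QuotSMulTop y ↥(LinearMap.ker f) ≃ₗ[A] ↥(LinearMap.ker (QuotSMulTop.map y f)) :=
      (LinearEquiv.ofInjective _ hinj).trans (LinearEquiv.ofEq _ _ hker.symm)
    exact GoodRes.congr e (IH hres hyC)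


lemma isWeaklyRegular_of_free (ys : List A) (h : IsWeaklyRegular A ys)
    (X : Type v) [AddCommGroup X] [Module A X] [Module.Free A X] :
    IsWeaklyRegular X ys :=
  ((TensorProduct.rid A X).isWeaklyRegular_congr ys).mp h.isWeaklyRegular_lTensor

lemma socle_subsingleton [IsLocalRing A] {N : Type v} [AddCommGroup N] [Module A N]
    (hfl : IsFiniteLength A N) {y : A} (hy : y ∈ maximalIdeal A)
    (hreg : IsSMulRegular N y) : Subsingleton N := by
  obtain ⟨h1, h2⟩ := isFiniteLength_iff_isNoetherian_isArtinian.mp hfl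
  have hinj : Function.Injective (LinearMap.lsmul A N y) := by
    intro a b hab
    exact hreg (by simpa using hab)
  have hsurj : Function.Surjective (LinearMap.lsmul A N y) :=
    IsArtinian.surjective_of_injective_endomorphism _ hinj
  have htop : (⊤ : Submodule A N) ≤ (maximalIdeal A) • ⊤ := by
    intro x _
    obtain ⟨z, hz⟩ := hsurj x
    have : x = y • z := by simpa using hz.symm
    rw [this]
    exact Submodule.smul_mem_smul hy Submodule.mem_top
  have hbot : (⊤ : Submodule A N) = ⊥ :=
    Submodule.eq_bot_of_le_smul_of_le_jacobson_bot (maximalIdeal A) ⊤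
      (IsNoetherian.noetherian ⊤) htop (IsLocalRing.maximalIdeal_le_jacobson ⊥)
  have hzero : ∀ x : N, x = 0 := by
    intro x
    have : x ∈ (⊥ : Submodule A N) := hbot ▸ Submodule.mem_top
    simpa using this
  exact ⟨fun a b => by rw [hzero a, hzero b]⟩

lemma isFiniteLength_submodule {M : Type v} [AddCommGroup M] [Module A M]
    (h : IsFiniteLength A M) (p : Submodule A M) : IsFiniteLength A ↥p := by
  obtain ⟨h1, h2⟩ := isFiniteLength_iff_isNoetherian_isArtinian.mp h
  exact isFiniteLength_iff_isNoetherian_isArtinian.mpr ⟨inferInstance, inferInstance⟩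

lemma submodule_eq_bot_of_subsingleton {W : Type v} [AddCommGroup W] [Module A W]
    [Subsingleton W] (K : Submodule A W) : K = ⊥ := by
  ext x
  have : x = 0 := Subsingleton.elim _ _
  simp [this]

lemma eq_bot_of_subtype_subsingleton {W : Type v} [AddCommGroup W] [Module A W]
    (K : Submodule A W) (h : Subsingleton ↥K) : K = ⊥ := by
  ext x
  simp only [Submodule.mem_bot]
  constructor
  · intro hx
    have : (⟨x, hx⟩ : ↥K) = ⟨0, K.zero_mem⟩ := Subsingleton.elim _ _
    exact congrArg Subtype.val this
  · rintro rfl; exact K.zero_mem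


theorem lemE [IsLocalRing A] (ys : List A) :
    (∀ y ∈ ys, y ∈ maximalIdeal A) → ∀ (n : ℕ), n ≤ ys.length →
    ∀ (W : Type v) [AddCommGroup W] [Module A W] (K : Submodule A W),
      GoodRes ys n W → IsFiniteLength A ↥K →
      (∀ y, ys.head? = some y → ∀ w : W, y • w = 0 → w ∈ K) → K = ⊥ := by
  induction ys with
  | nil =>
    intro _ n hn W _ _ K hres _ _
    have hn0 : n = 0 := Nat.le_zero.mp hn
    subst hn0
    have : Subsingleton W := hres
    exact submodule_eq_bot_of_subsingleton K
  | cons y ys' IH =>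
    intro hmem n hn W _ _ K hres hKfl htor
    cases n with
    | zero =>
      have : Subsingleton W := hres
      exact submodule_eq_bot_of_subsingleton K
    | succ m =>
      obtain ⟨G, _, _, f, hfsurj, hreg, hres'⟩ := hres
      obtain ⟨hyG, hregq⟩ := (isWeaklyRegular_cons_iff _ _ _).mp hreg
      set B := LinearMap.ker f with hBdef
      have hyB : IsSMulRegular ↥B y := fun a b hab =>
        Subtype.ext (hyG (by simpa using congrArg Subtype.val hab))
      set K₁ : Submodule A W := LinearMap.ker (LinearMap.lsmul A W y) with hK₁def
      have hK₁mem : ∀ w : W, w ∈ K₁ ↔ y • w = 0 := by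
        intro w
        rw [hK₁def, LinearMap.mem_ker, LinearMap.lsmul_apply]
      have hK₁K : K₁ ≤ K := fun w hw => htor y rfl w ((hK₁mem w).mp hw)
      set T : Submodule A G := Submodule.comap f K₁ with hTdef
      have hmemB : ∀ x : ↥T, ((LinearMap.lsmul A G y).comp T.subtype) x ∈ B := by
        intro x
        have hx : y • f (x : G) = 0 := (hK₁mem _).mp x.2
        show f (y • (x : G)) = 0
        rw [map_smul]
        exact hx
      set α : ↥T →ₗ[A] ↥B :=
        LinearMap.codRestrict B ((LinearMap.lsmul A G y).comp T.subtype) hmemB with hαdef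
      have hαval : ∀ x : ↥T, ((α x : G)) = y • (x : G) := fun x => rfl
      set β : ↥T →ₗ[A] QuotSMulTop y ↥B := (y • (⊤ : Submodule A ↥B)).mkQ.comp α with hβdef
      set f' : ↥T →ₗ[A] ↥K₁ :=
        LinearMap.codRestrict K₁ (f.comp T.subtype) (fun c => c.2) with hf'def
      have hf'surj : Function.Surjective f' := by
        rintro ⟨w, hw⟩
        obtain ⟨g, rfl⟩ := hfsurj w
        exact ⟨⟨g, hw⟩, rfl⟩
      have hsub : (y • (⊤ : Submodule A ↥B)) ≤
          Submodule.comap B.subtype (y • (⊤ : Submodule A G)) := by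
        intro b hb
        obtain ⟨b', hb'⟩ := (mem_smul_top_iff y b).mp hb
        rw [Submodule.mem_comap, mem_smul_top_iff]
        exact ⟨(b' : G), by rw [← hb']; rfl⟩
      set ι : QuotSMulTop y ↥B →ₗ[A] QuotSMulTop y G :=
        Submodule.mapQ _ _ B.subtype hsub with hιdef
      have hιmk : ∀ b : ↥B, ι (Submodule.Quotient.mk b)
          = (Submodule.Quotient.mk (b : G) : QuotSMulTop y G) := fun b => rfl
      set K' : Submodule A (QuotSMulTop y ↥B) := LinearMap.ker ι with hK'def
      have hβmk : ∀ x : ↥T, β x = Submodule.Quotient.mk (α x) := fun x => rfl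
      have hβker : LinearMap.ker β = LinearMap.ker f' := by
        ext x
        simp only [LinearMap.mem_ker]
        constructor
        · intro hx
          have h1 : α x ∈ y • (⊤ : Submodule A ↥B) := by
            rw [← Submodule.Quotient.mk_eq_zero, ← hβmk]
            exact hx
          obtain ⟨b, hb⟩ := (mem_smul_top_iff y (α x)).mp h1
          have h2 : y • (b : G) = y • (x : G) := by
            have := congrArg Subtype.val hb
            simpa [hαval] using this
          have h3 : (x : G) ∈ B := (hyG h2) ▸ b.2
          exact Subtype.ext (LinearMap.mem_ker.mp h3)
        · intro hx
          have h3 : (x : G) ∈ B := LinearMap.mem_ker.mpr (congrArg Subtype.val hx)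
          rw [hβmk, Submodule.Quotient.mk_eq_zero, mem_smul_top_iff]
          exact ⟨⟨(x : G), h3⟩, Subtype.ext rfl⟩
      have hK'range : K' = LinearMap.range β := by
        ext w
        constructor
        · intro hw
          obtain ⟨b, rfl⟩ := Submodule.mkQ_surjective _ w
          have hw0 : ι (Submodule.Quotient.mk b) = 0 := LinearMap.mem_ker.mp hw
          rw [hιmk] at hw0
          have h1 : (b : G) ∈ y • (⊤ : Submodule A G) :=
            (Submodule.Quotient.mk_eq_zero _).mp hw0
          obtain ⟨g, hg⟩ := (mem_smul_top_iff _ _).mp h1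
          have hgT : g ∈ T := by
            rw [hTdef, Submodule.mem_comap, hK₁mem, ← map_smul, hg]
            exact b.2
          refine ⟨⟨g, hgT⟩, ?_⟩
          rw [hβmk]
          show (Submodule.Quotient.mk (α ⟨g, hgT⟩) : QuotSMulTop y ↥B)
            = Submodule.Quotient.mk b
          congr 1
          exact Subtype.ext (by rw [hαval]; exact hg)
        · rintro ⟨x, rfl⟩
          rw [hK'def, LinearMap.mem_ker, hβmk, hιmk, Submodule.Quotient.mk_eq_zero,
            mem_smul_top_iff]
          exact ⟨(x : G), (hαval x).symm⟩
      have e1 : ↥K' ≃ₗ[A] ↥K₁ :=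
        (LinearEquiv.ofEq _ _ hK'range).trans <|
          (LinearMap.quotKerEquivRange β).symm.trans <|
            (Submodule.quotEquivOfEq _ _ hβker).trans <|
              f'.quotKerEquivOfSurjective hf'surj
      have hK₁fl : IsFiniteLength A ↥K₁ :=
        (Submodule.comapSubtypeEquivOfLe hK₁K).isFiniteLength
          (isFiniteLength_submodule hKfl _)
      have hK'fl : IsFiniteLength A ↥K' := e1.symm.isFiniteLength hK₁fl
      have hgr : GoodRes ys' m (QuotSMulTop y ↥B) := GoodRes.quot hres' hyB
      have htor' : ∀ z, ys'.head? = some z →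
          ∀ w' : QuotSMulTop y ↥B, z • w' = 0 → w' ∈ K' := by
        intro z hz w' hw'
        obtain ⟨tl, rfl⟩ : ∃ tl, ys' = z :: tl := by
          cases ys' with
          | nil => simp at hz
          | cons a tl =>
            simp only [List.head?_cons, Option.some.injEq] at hz
            exact ⟨tl, by rw [hz]⟩
        have hzreg : IsSMulRegular (QuotSMulTop y G) z :=
          ((isWeaklyRegular_cons_iff _ _ _).mp hregq).1
        rw [hK'def, LinearMap.mem_ker]
        apply hzreg
        show z • ι w' = z • 0
        rw [← map_smul, hw', map_zero, smul_zero]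
      have hK'bot : K' = ⊥ :=
        IH (fun z hz => hmem z (List.mem_cons_of_mem _ hz)) m
          (Nat.succ_le_succ_iff.mp hn) (QuotSMulTop y ↥B) K' hgr hK'fl htor'
      have hK₁sub : Subsingleton ↥K₁ := by
        have h0 : Subsingleton ↥K' := by rw [hK'bot]; infer_instance
        exact e1.symm.toEquiv.subsingleton
      have hK₁bot : K₁ = ⊥ := eq_bot_of_subtype_subsingleton _ hK₁sub
      have hyK : IsSMulRegular ↥K y := by
        intro a b hab
        have hdiff : ((a : W) - b) ∈ K₁ := by
          rw [hK₁mem, smul_sub]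
          have : y • (a : W) = y • (b : W) := by simpa using congrArg Subtype.val hab
          rw [this, sub_self]
        rw [hK₁bot] at hdiff
        have : (a : W) = b := by
          have := (Submodule.mem_bot A).mp hdiff
          rwa [sub_eq_zero] at this
        exact Subtype.ext this
      have hKsub : Subsingleton ↥K :=
        socle_subsingleton hKfl (hmem y List.mem_cons_self) hyK
      exact eq_bot_of_subtype_subsingleton _ hKsub


lemma lemR (ys : List A) (X : ℕ → Type v) [∀ i, AddCommGroup (X i)] [∀ i, Module A (X i)]
    (f : ∀ i, X (i+1) →ₗ[A] X i) (hregX : ∀ i, IsWeaklyRegular (X i) ys) :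
    ∀ (m t' : ℕ), (∀ i, t' ≤ i → LinearMap.ker (f i) = LinearMap.range (f (i+1))) →
    (∀ i, t' + m < i → Subsingleton (X i)) →
    GoodRes ys m ↥(LinearMap.range (f t')) := by
  intro m
  induction m with
  | zero =>
    intro t' _ hz
    have hss : Subsingleton (X (t'+1)) := hz (t'+1) (by omega)
    show Subsingleton ↥(LinearMap.range (f t'))
    constructor
    intro u v
    apply Subtype.ext
    obtain ⟨x, hx⟩ := u.2
    obtain ⟨z, hz'⟩ := v.2
    rw [← hx, ← hz', Subsingleton.elim x z]
  | succ m IHm =>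
    intro t' hex hz
    refine ⟨X (t'+1), inferInstance, inferInstance, (f t').rangeRestrict,
      LinearMap.surjective_rangeRestrict _, hregX _, ?_⟩
    rw [LinearMap.ker_rangeRestrict, hex t' le_rfl]
    exact IHm (t'+1) (fun i hi => hex i (by omega)) (fun i hi => hz i (by omega))

theorem key [IsLocalRing A] (ys : List A) (X : ℕ → Type v)
    [∀ i, AddCommGroup (X i)] [∀ i, Module A (X i)]
    (f : ∀ i, X (i+1) →ₗ[A] X i)
    (hmem : ∀ y ∈ ys, y ∈ maximalIdeal A) (hysreg : IsWeaklyRegular A ys)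
    (d : ℕ) (hlen : ys.length = d)
    (hfree : ∀ i, Module.Free A (X i))
    (hcomp : ∀ i (x : X (i+2)), f i (f (i+1) x) = 0)
    (hzero : ∀ i, d < i → Subsingleton (X i))
    (hfl : ∀ t, IsFiniteLength A
      (↥(LinearMap.ker (f t)) ⧸ Submodule.comap (LinearMap.ker (f t)).subtype
        (LinearMap.range (f (t+1))))) :
    ∀ t, LinearMap.ker (f t) = LinearMap.range (f (t+1)) := by
  have hregX : ∀ i, IsWeaklyRegular (X i) ys := fun i =>
    letI := hfree i
    isWeaklyRegular_of_free ys hysreg (X i)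
  have htriv : ∀ t, d ≤ t → LinearMap.ker (f t) = LinearMap.range (f (t+1)) := by
    intro t ht
    have : Subsingleton (X (t+1)) := hzero _ (by omega)
    ext x
    have hx0 : x = 0 := Subsingleton.elim _ _
    subst hx0
    simp
  have hmain : ∀ t, t < d →
      (∀ i, t < i → LinearMap.ker (f i) = LinearMap.range (f (i+1))) →
      LinearMap.ker (f t) = LinearMap.range (f (t+1)) := by
    intro t ht hind
    set W := X (t+1) ⧸ LinearMap.range (f (t+1)) with hWdef
    set q := (LinearMap.range (f (t+1))).mkQ with hqdef
    set φ : ↥(LinearMap.ker (f t)) →ₗ[A] W := q.comp (LinearMap.ker (f t)).subtype with hφdef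
    set K := LinearMap.range φ with hKdef
    obtain ⟨m, hm⟩ : ∃ m, d - t = m + 1 := ⟨d - t - 1, by omega⟩
    have hgr : GoodRes ys (d - t) W := by
      rw [hm]
      refine ⟨X (t+1), inferInstance, inferInstance, q, Submodule.mkQ_surjective _, hregX _, ?_⟩
      rw [hqdef, Submodule.ker_mkQ]
      exact lemR ys X f hregX m (t+1) (fun i hi => hind i (by omega))
        (fun i hi => hzero i (by omega))
    have hkerφ : LinearMap.ker φ = Submodule.comap (LinearMap.ker (f t)).subtype
        (LinearMap.range (f (t+1))) := by
      rw [hφdef, LinearMap.ker_comp, hqdef, Submodule.ker_mkQ]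
    have eK : ↥K ≃ₗ[A] (↥(LinearMap.ker (f t)) ⧸ Submodule.comap
        (LinearMap.ker (f t)).subtype (LinearMap.range (f (t+1)))) :=
      (LinearMap.quotKerEquivRange φ).symm.trans (Submodule.quotEquivOfEq _ _ hkerφ)
    have hKfl : IsFiniteLength A ↥K := eK.symm.isFiniteLength (hfl t)
    have htor : ∀ z, ys.head? = some z → ∀ w : W, z • w = 0 → w ∈ K := by
      intro z hz w hw
      obtain ⟨x, rfl⟩ := Submodule.mkQ_surjective _ w
      have h1 : z • x ∈ LinearMap.range (f (t+1)) := by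
        rw [← Submodule.Quotient.mk_eq_zero]
        rw [Submodule.mkQ_apply] at hw
        rw [Submodule.Quotient.mk_smul]
        exact hw
      obtain ⟨u, hu⟩ := h1
      have h2 : z • f t x = 0 := by
        rw [← map_smul, ← hu]
        exact hcomp t u
      have hzreg : IsSMulRegular (X t) z := by
        cases ys with
        | nil => simp at hz
        | cons a tl =>
          simp only [List.head?_cons, Option.some.injEq] at hz
          subst hz
          exact ((isWeaklyRegular_cons_iff _ _ _).mp (hregX t)).1
      have h3 : f t x = 0 := by
        apply hzreg
        show z • f t x = z • 0
        rw [h2, smul_zero]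
      exact ⟨⟨x, h3⟩, rfl⟩
    have hKbot : K = ⊥ := lemE ys hmem (d - t) (by omega) W K hgr hKfl htor
    apply le_antisymm
    · intro x hx
      have hmemK : φ ⟨x, hx⟩ ∈ K := ⟨_, rfl⟩
      rw [hKbot, Submodule.mem_bot] at hmemK
      have : (Submodule.Quotient.mk x : W) = 0 := hmemK
      rwa [Submodule.Quotient.mk_eq_zero] at this
    · rintro x ⟨u, rfl⟩
      exact LinearMap.mem_ker.mpr (hcomp t u)
  have hall : ∀ k t, d ≤ t + k → LinearMap.ker (f t) = LinearMap.range (f (t+1)) := by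
    intro k
    induction k with
    | zero => intro t ht; exact htriv t (by omega)
    | succ k IHk =>
      intro t ht
      rcases le_or_gt d t with h | h
      · exact htriv t h
      · exact hmain t h (fun i hi => IHk i (by omega))
  intro t
  exact hall d t (by omega)


lemma exists_regseq (A : Type) [CommRing A] [IsLocalRing A]
    (hCM : IsCohenMacaulayLocalRing A)
    {d : ℕ} (hd : ringKrullDim A = d) (hd1 : 1 ≤ d) :
    ∃ ys : List A, (∀ y ∈ ys, y ∈ maximalIdeal A) ∧
      RingTheory.Sequence.IsWeaklyRegular A ys ∧ ys.length = d := by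
  have hdepth : localDepth A = (d : ℕ∞) := by
    have h := hCM
    rw [IsCohenMacaulayLocalRing, hd] at h
    exact_mod_cast h
  have h1 : ∃ rs : List A, (∀ r ∈ rs, r ∈ maximalIdeal A) ∧
      RingTheory.Sequence.IsRegular A rs ∧ d ≤ rs.length := by
    by_contra hcon
    push_neg at hcon
    have hle : localDepth A ≤ ((d - 1 : ℕ) : ℕ∞) := by
      apply sSup_le
      rintro n ⟨rs, hmemrs, hregrs, rfl⟩
      have hlt := hcon rs hmemrs hregrs
      exact_mod_cast Nat.cast_le.mpr (by omega : rs.length ≤ d - 1)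
    rw [hdepth] at hle
    have : d ≤ d - 1 := by exact_mod_cast hle
    omega
  obtain ⟨rs, hmemrs, hregrs, hlenrs⟩ := h1
  have h2 : RingTheory.Sequence.IsWeaklyRegular A (rs.take d ++ rs.drop d) := by
    rw [List.take_append_drop]
    exact hregrs.toIsWeaklyRegular
  refine ⟨rs.take d, fun y hy => hmemrs y (List.take_subset d rs hy),
    ((isWeaklyRegular_append_iff _ _ _).mp h2).1, ?_⟩
  rw [List.length_take]
  omega


end CMVanishing

/-- Over a Cohen-Macaulay noetherian local ring `A` of dimension `d`, a complex of finite
free modules concentrated in degrees `0, …, d` with `H_0` finitely generated and `H_i` of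
finite length for `i ≥ 1` has vanishing higher homology. -/
theorem homology_vanishing_of_cohenMacaulay
    (A : Type) [CommRing A] [IsLocalRing A] [IsNoetherianRing A]
    (hCM : IsCohenMacaulayLocalRing A)
    (d : ℕ) (hd : ringKrullDim A = d)
    (M : ChainComplex (ModuleCat A) ℕ)
    (hbound : ∀ i : ℕ, d < i → IsZero (M.X i))
    (hfree : ∀ i : ℕ, Module.Free A (M.X i))
    (hfg : ∀ i : ℕ, Module.Finite A (M.X i))
    (hH0 : Module.Finite A (M.homology 0))
    (hHi : ∀ i : ℕ, 1 ≤ i → IsFiniteLength A (M.homology i)) :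
    ∀ i : ℕ, 1 ≤ i → IsZero (M.homology i) := by
  intro s hs
  rcases le_or_gt s d with hsd | hsd
  case inr =>
    rw [← HomologicalComplex.exactAt_iff_isZero_homology, HomologicalComplex.exactAt_iff]
    exact ShortComplex.exact_of_isZero_X₂ _ (hbound s hsd)
  case inl =>
    obtain ⟨t, rfl⟩ : ∃ t, s = t + 1 := ⟨s - 1, by omega⟩
    obtain ⟨ys, hysm, hysreg, hyslen⟩ := CMVanishing.exists_regseq A hCM hd (by omega)
    set X : ℕ → Type _ := fun i => (M.X i : Type _) with hXdef
    set f : ∀ i : ℕ, X (i+1) →ₗ[A] X i := fun i => (M.d (i+1) i).hom with hfdef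
    have hcomp : ∀ i (x : X (i+2)), f i (f (i+1) x) = 0 := by
      intro i x
      have hdd := M.d_comp_d (i+2) (i+1) i
      calc f i (f (i+1) x) = (M.d (i+2) (i+1) ≫ M.d (i+1) i) x := rfl
        _ = (0 : M.X (i+2) ⟶ M.X i) x := by rw [hdd]
        _ = 0 := rfl
    have hzero : ∀ i, d < i → Subsingleton (X i) := by
      intro i hi
      have h1 : (𝟙 (M.X i) : M.X i ⟶ M.X i) = 0 := (hbound i hi).eq_of_src _ _
      have hz : ∀ x : X i, x = 0 := by
        intro x
        calc x = (𝟙 (M.X i) : M.X i ⟶ M.X i) x := rfl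
          _ = (0 : M.X i ⟶ M.X i) x := by rw [h1]
          _ = 0 := rfl
      exact ⟨fun a b => by rw [hz a, hz b]⟩
    have hfl : ∀ u, IsFiniteLength A
        (↥(LinearMap.ker (f u)) ⧸ Submodule.comap (LinearMap.ker (f u)).subtype
          (LinearMap.range (f (u+1)))) := by
      intro u
      have h1 : IsFiniteLength A (M.homology (u+1)) := hHi (u+1) (by omega)
      set S := M.sc' (u+2) (u+1) u with hSdef
      have e1 : M.homology (u+1) ≅ S.homology :=
        M.homologyIsoSc' (u+2) (u+1) u (ChainComplex.prev ℕ (u+1))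
          (ChainComplex.next_nat_succ u)
      have e2 : S.homology ≅ S.moduleCatLeftHomologyData.H :=
        S.moduleCatLeftHomologyData.homologyIso
      have h2 : IsFiniteLength A (LinearMap.ker S.g.hom ⧸ LinearMap.range S.moduleCatToCycles) :=
        ((e1 ≪≫ e2).toLinearEquiv).isFiniteLength h1
      have h3 : LinearMap.range S.moduleCatToCycles
          = Submodule.comap (LinearMap.ker S.g.hom).subtype (LinearMap.range S.f.hom) := by
        ext x
        constructor
        · rintro ⟨a, rfl⟩; exact ⟨a, rfl⟩
        · rintro ⟨a, ha⟩; exact ⟨a, Subtype.ext ha⟩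
      exact (Submodule.quotEquivOfEq _ _ h3).isFiniteLength h2
    have hker := CMVanishing.key ys X f hysm hysreg d hyslen hfree hcomp hzero hfl
    rw [← HomologicalComplex.exactAt_iff_isZero_homology,
      HomologicalComplex.exactAt_iff' M (t+2) (t+1) t (ChainComplex.prev ℕ (t+1))
        (ChainComplex.next_nat_succ t),
      ShortComplex.moduleCat_exact_iff_range_eq_ker]
    exact (hker t).symm
end

section
/- Let (A, m, k) be a noetherian commutative local ring, C an A-module, and I an m-primary ideal. If Tor_1^A(C, k) = 0, then Tor_1^{A/I}(C/IC, k) = 0. -/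
open CategoryTheory Limits IsLocalRing

noncomputable section

namespace TorAux

open CategoryTheory CategoryTheory.Limits CategoryTheory.Projective

universe v u

variable {C : Type u} [Category.{v} C] [Abelian C] [EnoughProjectives C]

/-- A projective resolution complex starting from a chosen epimorphism `p : P₀ ⟶ Z`. -/
def resComplex {Z P₀ : C} (p : P₀ ⟶ Z) : ChainComplex C ℕ :=
  ChainComplex.mk' P₀ (Projective.syzygies p) (Projective.d p)
    (fun f => ⟨_, Projective.d f,
      (Category.assoc _ _ _).trans ((congrArg _ (kernel.condition f)).trans comp_zero)⟩)

lemma resComplex_d_1_0 {Z P₀ : C} (p : P₀ ⟶ Z) :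
    (resComplex p).d 1 0 = Projective.d p := by
  simp [resComplex]

lemma resComplex_exactAt_succ {Z P₀ : C} (p : P₀ ⟶ Z) (n : ℕ) :
    (resComplex p).ExactAt (n + 1) := by
  rw [HomologicalComplex.exactAt_iff' _ (n + 1 + 1) (n + 1) n (by simp) (by simp)]
  refine (ShortComplex.exact_iff_of_iso ?_).2 (exact_d_f ((resComplex p).d (n + 1) n))
  refine ShortComplex.isoMk ?_ (Iso.refl _) (Iso.refl _) ?_ ?_
  · exact ChainComplex.mk'XIso (V := C) P₀ (Projective.syzygies p) (Projective.d p)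
      (fun f => ⟨_, Projective.d f,
        (Category.assoc _ _ _).trans ((congrArg _ (kernel.condition f)).trans comp_zero)⟩) n
  · erw [Category.comp_id]
    exact (ChainComplex.mk'_d _ _ _ _ n).symm
  · erw [Category.comp_id, Category.id_comp]
    rfl

instance resComplex_projective {Z P₀ : C} (p : P₀ ⟶ Z) [Projective P₀] (n : ℕ) :
    Projective ((resComplex p).X n) := by
  obtain (_ | _ | _ | n) := n
  · exact inferInstanceAs (Projective P₀)
  · apply Projective.projective_over
  · apply Projective.projective_over
  · apply Projective.projective_over

/-- The projective resolution determined by a chosen epi from a projective object. -/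
def resolutionOfEpi {Z P₀ : C} (p : P₀ ⟶ Z) [Projective P₀] [Epi p] :
    ProjectiveResolution Z where
  complex := resComplex p
  π := (ChainComplex.toSingle₀Equiv _ _).symm ⟨p, by
        rw [resComplex_d_1_0]
        exact (Category.assoc _ _ _).trans ((congrArg _ (kernel.condition p)).trans comp_zero)⟩
  quasiIso := ⟨fun n => by
    cases n
    · rw [ChainComplex.quasiIsoAt₀_iff, ShortComplex.quasiIso_iff_of_zeros']
      · refine (ShortComplex.exact_and_epi_g_iff_of_iso ?_).2
          ⟨exact_d_f p, by dsimp; infer_instance⟩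
        exact ShortComplex.isoMk (Iso.refl _) (Iso.refl _) (Iso.refl _)
          (by erw [Category.id_comp, Category.comp_id]; exact (resComplex_d_1_0 p).symm)
          (by erw [Category.id_comp, Category.comp_id]; exact (ChainComplex.toSingle₀Equiv_symm_apply_f_zero (C := resComplex p) p _).symm)
      all_goals rfl
    · rw [quasiIsoAt_iff_exactAt']
      · apply resComplex_exactAt_succ
      · apply ChainComplex.exactAt_succ_single_obj⟩

@[simp] lemma resolutionOfEpi_complex {Z P₀ : C} (p : P₀ ⟶ Z) [Projective P₀] [Epi p] :
    (resolutionOfEpi p).complex = resComplex p := rfl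






open LinearMap TensorProduct

/-- Criterion: given a presentation `P₂ → P₁ → R` of `R/J` (i.e. `h` has image `J` and
`(g, h)` is exact), exactness after tensoring with `M` is equivalent to injectivity of
`M ⊗ J → M ⊗ R`. -/
theorem exact_lTensor_iff_injective {R : Type} [CommRing R] (M : Type) [AddCommGroup M]
    [Module R M] {P₂ P₁ : Type} [AddCommGroup P₂] [Module R P₂] [AddCommGroup P₁] [Module R P₁]
    (J : Ideal R) (g : P₂ →ₗ[R] P₁) (h : P₁ →ₗ[R] R)
    (hgh : Function.Exact g h) (hmem : ∀ x, h x ∈ J) (hsurj : ∀ y ∈ J, ∃ x, h x = y) :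
    Function.Exact (LinearMap.lTensor M g) (LinearMap.lTensor M h) ↔
      Function.Injective (LinearMap.lTensor M J.subtype) := by
  set q : P₁ →ₗ[R] J := h.codRestrict J hmem with hq
  have hqs : Function.Surjective q := by
    rintro ⟨y, hy⟩
    obtain ⟨x, hx⟩ := hsurj y hy
    exact ⟨x, Subtype.ext hx⟩
  have hgq : Function.Exact g q := by
    intro x
    constructor
    · intro hx
      exact (hgh x).1 (congrArg Subtype.val hx)
    · intro hx
      exact Subtype.ext ((hgh x).2 hx)
  have hcomp : LinearMap.lTensor M h =
      (LinearMap.lTensor M J.subtype).comp (LinearMap.lTensor M q) := by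
    rw [← LinearMap.lTensor_comp, LinearMap.subtype_comp_codRestrict]
  have hTq : Function.Exact (LinearMap.lTensor M g) (LinearMap.lTensor M q) :=
    lTensor_exact M hgq hqs
  have hTqs : Function.Surjective (LinearMap.lTensor M q) :=
    LinearMap.lTensor_surjective M hqs
  constructor
  · intro hex
    intro a b hab
    have hz : LinearMap.lTensor M J.subtype (a - b) = 0 := by
      rw [map_sub, hab, sub_self]
    obtain ⟨w, hw⟩ := hTqs (a - b)
    have hwh : LinearMap.lTensor M h w = 0 := by
      rw [hcomp, LinearMap.comp_apply, hw, hz]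
    obtain ⟨u, hu⟩ := (hex w).1 hwh
    have : a - b = 0 := by
      rw [← hw, ← hu, ← LinearMap.comp_apply, ← LinearMap.lTensor_comp]
      have hqg : q.comp g = 0 := by
        ext x
        simpa using hgq.apply_apply_eq_zero x
      rw [hqg, LinearMap.lTensor_zero, LinearMap.zero_apply]
    exact sub_eq_zero.mp this
  · intro hinj
    intro y
    constructor
    · intro hy
      rw [hcomp, LinearMap.comp_apply] at hy
      have h0 : LinearMap.lTensor M q y = 0 := by
        apply hinj
        rw [hy, map_zero]
      exact (hTq y).1 h0
    · rintro ⟨u, rfl⟩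
      rw [hcomp, LinearMap.comp_apply, ← LinearMap.comp_apply (lTensor M q), ← lTensor_comp]
      have hqg : q.comp g = 0 := by
        ext x
        simpa using hgq.apply_apply_eq_zero x
      rw [hqg, LinearMap.lTensor_zero, LinearMap.zero_apply, map_zero]





open LinearMap TensorProduct

variable (A : Type) [CommRing A] (C : Type) [AddCommGroup C] [Module A C]
  (I J : Ideal A)

/-- The multiplication map `C ⊗ J → C`. -/
noncomputable def mulMap : C ⊗[A] J →ₗ[A] C :=
  TensorProduct.lift (((LinearMap.lsmul A C).comp J.subtype).flip)

@[simp] lemma mulMap_tmul (c : C) (a : J) : mulMap A C J (c ⊗ₜ a) = (a : A) • c := rfl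

lemma mulMap_eq : mulMap A C J =
    (TensorProduct.rid A C).toLinearMap.comp (LinearMap.lTensor C J.subtype) := by
  apply TensorProduct.ext'
  intro c a
  simp [mulMap]

/-- The additive map `J → J.map (mk I)`. -/
def jmap : J →+ (J.map (Ideal.Quotient.mk I)) where
  toFun a := ⟨Ideal.Quotient.mk I (a : A), Ideal.mem_map_of_mem _ a.2⟩
  map_zero' := Subtype.ext (by simp)
  map_add' a b := Subtype.ext (by simp)

@[simp] lemma jmap_coe (a : J) : (jmap A I J a : A ⧸ I) = Ideal.Quotient.mk I (a : A) := rfl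

/-- The canonical additive map `C ⊗[A] J → (C/IC) ⊗[A/I] (J/I)`. -/
noncomputable def brMap :
    C ⊗[A] J →+ ((C ⧸ I • (⊤ : Submodule A C)) ⊗[A ⧸ I] (J.map (Ideal.Quotient.mk I))) :=
  TensorProduct.liftAddHom
    { toFun := fun c =>
        ((TensorProduct.mk (A ⧸ I) (C ⧸ I • (⊤ : Submodule A C))
          (J.map (Ideal.Quotient.mk I)) (Submodule.Quotient.mk c)).toAddMonoidHom).comp
          (jmap A I J)
      map_zero' := by
        ext a
        show (Submodule.Quotient.mk (0 : C)) ⊗ₜ (jmap A I J a) = 0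
        rw [Submodule.Quotient.mk_zero, TensorProduct.zero_tmul]
      map_add' := fun c d => by
        ext a
        show (Submodule.Quotient.mk (c + d)) ⊗ₜ (jmap A I J a) = _
        rw [Submodule.Quotient.mk_add, TensorProduct.add_tmul]
        rfl }
    (by
      intro r c a
      show (Submodule.Quotient.mk (r • c)) ⊗ₜ (jmap A I J a) =
        (Submodule.Quotient.mk c) ⊗ₜ (jmap A I J (r • a))
      have h1 : (Submodule.Quotient.mk (r • c) : C ⧸ I • (⊤ : Submodule A C)) =
          (Ideal.Quotient.mk I r) • Submodule.Quotient.mk c := rfl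
      have h2 : jmap A I J (r • a) = (Ideal.Quotient.mk I r) • jmap A I J a := by
        apply Subtype.ext
        show Ideal.Quotient.mk I (r • (a : A)) = _
        rw [Submodule.coe_smul, smul_eq_mul, map_mul]
        rfl
      rw [h1, h2, TensorProduct.smul_tmul])

@[simp] lemma brMap_tmul (c : C) (a : J) :
    brMap A C I J (c ⊗ₜ a) = (Submodule.Quotient.mk c) ⊗ₜ (jmap A I J a) :=
  TensorProduct.liftAddHom_tmul _ _ _ _

lemma brMap_surjective : Function.Surjective (brMap A C I J) := by
  intro z
  induction z using TensorProduct.induction_on with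
  | zero => exact ⟨0, map_zero _⟩
  | tmul c' a' =>
    obtain ⟨c, rfl⟩ := Submodule.Quotient.mk_surjective _ c'
    obtain ⟨a, ha, ha'⟩ := Ideal.mem_map_iff_of_surjective _
      Ideal.Quotient.mk_surjective |>.mp a'.2
    refine ⟨c ⊗ₜ ⟨a, ha⟩, ?_⟩
    rw [brMap_tmul]
    congr 1
    exact Subtype.ext ha'
  | add x y hx hy =>
    obtain ⟨x', hx'⟩ := hx
    obtain ⟨y', hy'⟩ := hy
    exact ⟨x' + y', by rw [map_add, hx', hy']⟩

lemma brMap_compat (x : C ⊗[A] J) :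
    mulMap (A ⧸ I) (C ⧸ I • (⊤ : Submodule A C)) (J.map (Ideal.Quotient.mk I))
        (brMap A C I J x) =
      Submodule.Quotient.mk (mulMap A C J x) := by
  induction x using TensorProduct.induction_on with
  | zero => simp
  | tmul c a =>
    rw [brMap_tmul, mulMap_tmul, mulMap_tmul]
    rfl
  | add x y hx hy =>
    rw [map_add, map_add, hx, hy, map_add]
    exact (Submodule.Quotient.mk_add _).symm

theorem bridge (hIJ : I ≤ J)
    (hinj : Function.Injective (LinearMap.lTensor C J.subtype)) :
    Function.Injective (LinearMap.lTensor (C ⧸ I • (⊤ : Submodule A C))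
      (J.map (Ideal.Quotient.mk I)).subtype) := by
  have hmul_inj : Function.Injective (mulMap A C J) := by
    rw [mulMap_eq]
    exact (TensorProduct.rid A C).injective.comp hinj
  have key : ∀ z, LinearMap.lTensor (C ⧸ I • (⊤ : Submodule A C))
      (J.map (Ideal.Quotient.mk I)).subtype z = 0 → z = 0 := by
    intro z hz
    obtain ⟨x, rfl⟩ := brMap_surjective A C I J z
    have h1 : (Submodule.Quotient.mk (mulMap A C J x) : C ⧸ I • (⊤ : Submodule A C)) = 0 := by
      rw [← brMap_compat A C I J x, mulMap_eq, LinearMap.comp_apply, hz, map_zero]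
    have h2 : mulMap A C J x ∈ I • (⊤ : Submodule A C) :=
      (Submodule.Quotient.mk_eq_zero _).mp h1
    have h3 : ∀ c ∈ I • (⊤ : Submodule A C),
        ∃ y : C ⊗[A] J, mulMap A C J y = c ∧ brMap A C I J y = 0 := by
      intro c hc
      refine Submodule.smul_induction_on hc ?_ ?_
      · intro r hr n _
        refine ⟨n ⊗ₜ ⟨r, hIJ hr⟩, by simp, ?_⟩
        rw [brMap_tmul]
        have : jmap A I J ⟨r, hIJ hr⟩ = 0 := by
          apply Subtype.ext
          simpa using (Ideal.Quotient.eq_zero_iff_mem).mpr hr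
        rw [this, TensorProduct.tmul_zero]
      · rintro x y ⟨x', hx1, hx2⟩ ⟨y', hy1, hy2⟩
        exact ⟨x' + y', by rw [map_add, hx1, hy1], by rw [map_add, hx2, hy2, add_zero]⟩
    obtain ⟨y, hy1, hy2⟩ := h3 _ h2
    have hyx : y = x := hmul_inj (by rw [hy1])
    rw [← hyx, hy2]
  intro a b hab
  have h0 : LinearMap.lTensor (C ⧸ I • (⊤ : Submodule A C))
      (J.map (Ideal.Quotient.mk I)).subtype (a - b) = 0 := by
    rw [map_sub, hab, sub_self]
  exact sub_eq_zero.mp (key _ h0)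


open CategoryTheory CategoryTheory.Limits CategoryTheory.MonoidalCategory LinearMap TensorProduct

theorem torIsZero_iff (R : Type) [CommRing R] (M : Type) [AddCommGroup M] [Module R M]
    (J : Ideal R) :
    TorIsZero R 1 M (R ⧸ J) ↔ Function.Injective (LinearMap.lTensor M J.subtype) := by
  haveI : Projective (ModuleCat.of R R) :=
    ModuleCat.projective_of_free (M := ModuleCat.of R R) (Module.Basis.singleton Unit R)
  set p : ModuleCat.of R R ⟶ ModuleCat.of R (R ⧸ J) := ModuleCat.ofHom J.mkQ with hp
  haveI : Epi p := (ModuleCat.epi_iff_surjective p).2 (Submodule.mkQ_surjective J)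
  set P : ProjectiveResolution (ModuleCat.of R (R ⧸ J)) := resolutionOfEpi p with hP
  set F : ModuleCat R ⥤ ModuleCat R := (tensoringLeft (ModuleCat R)).obj (ModuleCat.of R M)
    with hF
  have e := P.isoLeftDerivedObj F 1
  -- data of the resolution
  have hd10 : P.complex.d 1 0 = Projective.d p := resComplex_d_1_0 p
  have hdp_exact : Function.Exact ((Projective.d p).hom : _ →ₗ[R] _) ((p).hom : _ →ₗ[R] _) := by
    have := CategoryTheory.exact_d_f (C := ModuleCat R) p
    exact (ShortComplex.ShortExact.moduleCat_exact_iff_function_exact _).1 this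
  have hdp0 : ∀ x, ((p).hom : _ →ₗ[R] _) (((Projective.d p).hom : _ →ₗ[R] _) x) = 0 := by
    intro x
    exact hdp_exact.apply_apply_eq_zero x
  have hmem : ∀ x, ((P.complex.d 1 0).hom : _ →ₗ[R] _) x ∈ J := by
    intro x
    rw [hd10]
    have := hdp0 x
    exact (Submodule.Quotient.mk_eq_zero J).mp this
  have hsurj : ∀ y ∈ J, ∃ x, ((P.complex.d 1 0).hom : _ →ₗ[R] _) x = y := by
    intro y hy
    rw [hd10]
    exact (hdp_exact y).1 ((Submodule.Quotient.mk_eq_zero J).mpr hy)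
  have hgh : Function.Exact ((P.complex.d 2 1).hom : _ →ₗ[R] _) ((P.complex.d 1 0).hom : _ →ₗ[R] _) := by
    have h1 : P.complex.ExactAt 1 := resComplex_exactAt_succ p 0
    rw [HomologicalComplex.exactAt_iff' _ 2 1 0 (by simp) (by simp)] at h1
    exact (ShortComplex.ShortExact.moduleCat_exact_iff_function_exact _).1 h1
  -- main chain
  unfold TorIsZero
  have heq : (((Tor (ModuleCat R) 1).obj (ModuleCat.of R M)).obj (ModuleCat.of R (R ⧸ J))) =
      (F.leftDerived 1).obj (ModuleCat.of R (R ⧸ J)) := rfl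
  rw [heq, e.isZero_iff,
    show ((HomologicalComplex.homologyFunctor (ModuleCat R) _ 1).obj
        ((F.mapHomologicalComplex _).obj P.complex)) =
      ((F.mapHomologicalComplex _).obj P.complex).homology 1 from rfl,
    ← HomologicalComplex.exactAt_iff_isZero_homology,
    HomologicalComplex.exactAt_iff' _ 2 1 0 (by simp) (by simp),
    ShortComplex.ShortExact.moduleCat_exact_iff_function_exact]
  exact exact_lTensor_iff_injective M J
    ((P.complex.d 2 1).hom : _ →ₗ[R] _) ((P.complex.d 1 0).hom : _ →ₗ[R] _) hgh hmem hsurj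


end TorAux
end

/-- If `(A, m, k)` is a noetherian local ring, `C` an `A`-module and `I` an `m`-primary
ideal with `Tor_1^A(C, k) = 0`, then `Tor_1^{A/I}(C/IC, k) = 0`, where `k`, the residue
field of `A`, is realised as the quotient of `A/I` by the image of `m`. -/
theorem tor_vanishing_of_quotient
    (A : Type) [CommRing A] [IsLocalRing A] [IsNoetherianRing A]
    (C : Type) [AddCommGroup C] [Module A C]
    (I : Ideal A) (hIm : I ≤ maximalIdeal A) (hmI : ∃ n : ℕ, maximalIdeal A ^ n ≤ I)
    (hTor : TorIsZero A 1 C (ResidueField A)) :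
    TorIsZero (A ⧸ I) 1 (C ⧸ I • (⊤ : Submodule A C))
      ((A ⧸ I) ⧸ (maximalIdeal A).map (Ideal.Quotient.mk I)) := by
  have hTor' : TorIsZero A 1 C (A ⧸ maximalIdeal A) := hTor
  have h1 : Function.Injective (LinearMap.lTensor C (maximalIdeal A).subtype) :=
    (TorAux.torIsZero_iff A C (maximalIdeal A)).mp hTor'
  exact (TorAux.torIsZero_iff (A ⧸ I) (C ⧸ I • (⊤ : Submodule A C))
    ((maximalIdeal A).map (Ideal.Quotient.mk I))).mpr
    (TorAux.bridge A C I (maximalIdeal A) hIm h1)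
end
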